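/- The number of n-element subsets of the cyclic group ℤ_N (N > nk) such that any two distinct elements differ (cyclically) by more than k equals (N/(N−nk))·C(N−nk, n). -/

import Mathlib

open Finset

def gapSet (k L m : ℕ) : Finset (Finset ℕ) :=
  ((Finset.range L).powersetCard m).filter (fun t => ∀ a ∈ t, ∀ b ∈ t, a < b → a + k < b)

lemma gapSet_card (k : ℕ) : ∀ L m, (gapSet k L m).card = (L - (m-1)*k).choose m := by
  intro L
  induction L using Nat.strong_induction_on with
  | _ L IH =>
    intro m
    match L, m with
    | L, 0 =>
      simp [gapSet, Finset.filter_singleton]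
    | 0, m+1 =>
      have he : gapSet k 0 (m+1) = ∅ := by
        rw [gapSet, Finset.range_zero, Finset.powersetCard_eq_empty.mpr (by simp),
          Finset.filter_empty]
      rw [he]
      simp
    | L+1, m+1 =>
      classical
      have hsplit : (gapSet k (L+1) (m+1)).card
          = (gapSet k (L-k) m).card + (gapSet k L (m+1)).card := by
        rw [← Finset.card_filter_add_card_filter_not
          (s := gapSet k (L+1) (m+1)) (p := fun t => L ∈ t)]
        congr 1
        · -- bijection with gapSet k (L-k) m
          refine Finset.card_nbij' (fun t => t.erase L) (fun t => insert L t) ?_ ?_ ?_ ?_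
          · intro t ht
            simp only [Finset.mem_coe, Finset.mem_filter, gapSet, Finset.mem_powersetCard] at ht ⊢
            obtain ⟨⟨⟨hsub, hcard⟩, hq⟩, hL⟩ := ht
            refine ⟨⟨?_, ?_⟩, ?_⟩
            · intro x hx
              have hxt := Finset.mem_of_mem_erase hx
              have hxne := Finset.ne_of_mem_erase hx
              have hx1 : x < L + 1 := Finset.mem_range.mp (hsub hxt)
              have hxL : x < L := by omega
              have := hq x hxt L hL hxL
              exact Finset.mem_range.mpr (by omega)
            · rw [Finset.card_erase_of_mem hL, hcard]
              omega
            · intro a ha b hb hab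
              exact hq a (Finset.mem_of_mem_erase ha) b (Finset.mem_of_mem_erase hb) hab
          · intro t ht
            simp only [Finset.mem_coe, Finset.mem_filter, gapSet, Finset.mem_powersetCard] at ht ⊢
            obtain ⟨⟨hsub, hcard⟩, hq⟩ := ht
            have hLnot : L ∉ t := by
              intro h
              have := Finset.mem_range.mp (hsub h)
              omega
            refine ⟨⟨⟨?_, ?_⟩, ?_⟩, Finset.mem_insert_self _ _⟩
            · intro x hx
              rcases Finset.mem_insert.mp hx with h | h
              · exact Finset.mem_range.mpr (by omega)
              · have := Finset.mem_range.mp (hsub h)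
                exact Finset.mem_range.mpr (by omega)
            · rw [Finset.card_insert_of_notMem hLnot, hcard]
            · intro a ha b hb hab
              rcases Finset.mem_insert.mp ha with ha' | ha' <;>
                rcases Finset.mem_insert.mp hb with hb' | hb'
              · omega
              · have := Finset.mem_range.mp (hsub hb'); omega
              · have := Finset.mem_range.mp (hsub ha'); omega
              · exact hq a ha' b hb' hab
          · intro t ht
            simp only [Finset.mem_coe, Finset.mem_filter] at ht
            exact Finset.insert_erase ht.2
          · intro t ht
            simp only [Finset.mem_coe, Finset.mem_filter, gapSet, Finset.mem_powersetCard] at ht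
            have hLnot : L ∉ t := by
              intro h
              have := Finset.mem_range.mp (ht.1.1 h)
              omega
            exact Finset.erase_insert hLnot
        · -- filter (L ∉ ·) = gapSet k L (m+1)
          congr 1
          ext t
          simp only [Finset.mem_filter, gapSet, Finset.mem_powersetCard]
          constructor
          · rintro ⟨⟨⟨hsub, hc⟩, hq⟩, hL⟩
            refine ⟨⟨?_, hc⟩, hq⟩
            intro x hx
            have := Finset.mem_range.mp (hsub hx)
            have : x ≠ L := fun h => hL (h ▸ hx)
            have := Finset.mem_range.mp (hsub hx)
            exact Finset.mem_range.mpr (by omega)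
          · rintro ⟨⟨hsub, hc⟩, hq⟩
            refine ⟨⟨⟨?_, hc⟩, hq⟩, ?_⟩
            · intro x hx
              have := Finset.mem_range.mp (hsub hx)
              exact Finset.mem_range.mpr (by omega)
            · intro h
              have := Finset.mem_range.mp (hsub h)
              omega
      rw [hsplit, IH (L-k) (by omega) m, IH L (by omega) (m+1)]
      match m with
      | 0 => simp [Nat.choose_one_right]; omega
      | q+1 =>
        simp only [Nat.add_sub_cancel]
        have h1 : L - k - q * k = L - (q+1)*k := by
          rw [Nat.sub_sub]; ring_nf
        rw [h1]
        by_cases hL : (q+1)*k ≤ L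
        · rw [show L + 1 - (q+1)*k = (L - (q+1)*k) + 1 by omega, Nat.choose_succ_succ]
        · have h3 : L - (q+1)*k = 0 := by omega
          have h2 : L + 1 - (q+1)*k ≤ 1 := by omega
          rw [h3, Nat.choose_eq_zero_of_lt (by omega), Nat.choose_eq_zero_of_lt (by omega),
            Nat.choose_eq_zero_of_lt (by omega)]

lemma dvd_iff_eq (N : ℕ) [NeZero N] (d : ZMod N) (m : ℤ) :
    d = (m : ZMod N) ↔ (N:ℤ) ∣ ((d.val : ℤ) - m) := by
  conv_lhs => rw [show d = ((d.val : ℕ) : ZMod N) from (ZMod.natCast_rightInverse d).symm]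
  rw [show ((d.val : ℕ) : ZMod N) = (((d.val : ℕ) : ℤ) : ZMod N) by push_cast; ring]
  rw [ZMod.intCast_eq_intCast_iff, Int.modEq_iff_dvd, dvd_sub_comm]

lemma cond_iff (k N : ℕ) [NeZero N] (d : ZMod N) (hd : d ≠ 0) :
    (∀ m : ℤ, -(k:ℤ) ≤ m → m ≤ (k:ℤ) → d ≠ (m : ZMod N)) ↔
      (k < d.val ∧ d.val + k < N) := by
  have hvlt : d.val < N := ZMod.val_lt d
  have hv0 : d.val ≠ 0 := fun h => hd ((ZMod.val_eq_zero d).mp h)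
  constructor
  · intro h
    by_contra hcon
    push_neg at hcon
    by_cases h1 : d.val ≤ k
    · exact h (d.val : ℤ) (by omega) (by omega)
        ((dvd_iff_eq N d _).mpr (by simp))
    · push_neg at h1
      have h2 : N ≤ d.val + k := hcon h1
      exact h ((d.val : ℤ) - N) (by omega) (by omega)
        ((dvd_iff_eq N d _).mpr ⟨1, by ring⟩)
  · rintro ⟨h1, h2⟩ m hm1 hm2 heq
    obtain ⟨c, hc⟩ := (dvd_iff_eq N d m).mp heq
    have hN0 : 0 < N := Nat.pos_of_ne_zero (NeZero.ne N)
    have hpos : 0 < (d.val : ℤ) - m := by omega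
    have := Int.le_of_dvd hpos ((dvd_iff_eq N d m).mp heq)
    omega

lemma cond_neg {k N : ℕ} [NeZero N] {d : ZMod N} (hd : d ≠ 0)
    (h : k < d.val ∧ d.val + k < N) : k < (-d).val ∧ (-d).val + k < N := by
  have h1 := ZMod.neg_val d
  rw [if_neg hd] at h1
  have hvlt : d.val < N := ZMod.val_lt d
  omega

lemma sub_val_eq {N : ℕ} [NeZero N] {a b : ZMod N} (h : b.val ≤ a.val) :
    (a - b).val = a.val - b.val := ZMod.val_sub h

open Classical in
noncomputable def Scount (k n N : ℕ) [NeZero N] : Finset (Finset (ZMod N)) :=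
  Finset.univ.filter (fun A => A.card = n ∧
    ∀ a ∈ A, ∀ b ∈ A, a ≠ b → k < (a-b).val ∧ (a-b).val + k < N)

lemma mem_Scount {k n N : ℕ} [NeZero N] {A : Finset (ZMod N)} :
    A ∈ Scount k n N ↔ (A.card = n ∧
      ∀ a ∈ A, ∀ b ∈ A, a ≠ b → k < (a-b).val ∧ (a-b).val + k < N) := by
  classical
  rw [Scount, Finset.mem_filter]
  simp only [Finset.mem_univ, true_and]

/-- The number of n-element subsets of ℤ_N (N > nk) in which any two
distinct elements differ cyclically by more than k (no difference lies in
{1,…,k} ∪ {N−k,…,N−1}, i.e. in the image of {−k,…,k} ∖ {0}) equals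
(N/(N−nk))·C(N−nk, n); stated integrally as (N−nk)·count = N·C(N−nk, n). -/
theorem stmt_15 (k n N : ℕ) (hk : 0 < k) (hn : 0 < n) (hN : n * k < N) :
    (N - n * k) * Nat.card {A : Finset (ZMod N) // A.card = n ∧
        ∀ a ∈ A, ∀ b ∈ A, a ≠ b → ∀ m : ℤ, -(k : ℤ) ≤ m → m ≤ (k : ℤ) →
          a - b ≠ (m : ZMod N)}
      = N * (N - n * k).choose n := by
  classical
  have hN0 : 0 < N := by
    have : n * k ≥ 1 := Nat.one_le_iff_ne_zero.mpr (by positivity)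
    omega
  haveI : NeZero N := ⟨by omega⟩
  set S : Finset (Finset (ZMod N)) := Scount k n N with hSdef
  -- Step 0 : Nat.card = S.card
  have hcount : Nat.card {A : Finset (ZMod N) // A.card = n ∧
      ∀ a ∈ A, ∀ b ∈ A, a ≠ b → ∀ m : ℤ, -(k : ℤ) ≤ m → m ≤ (k : ℤ) →
        a - b ≠ (m : ZMod N)} = S.card := by
    rw [Nat.card_eq_fintype_card, Fintype.card_subtype, hSdef, Scount]
    congr 1
    apply Finset.filter_congr
    intro A _
    refine and_congr_right fun _ => ?_
    constructor
    · intro h a ha b hb hab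
      exact (cond_iff k N (a-b) (sub_ne_zero_of_ne hab)).mp (h a ha b hb hab)
    · intro h a ha b hb hab
      exact (cond_iff k N (a-b) (sub_ne_zero_of_ne hab)).mpr (h a ha b hb hab)
  -- translation invariance
  have htrans : ∀ x : ZMod N,
      (S.filter (fun A => x ∈ A)).card = (S.filter (fun A => (0:ZMod N) ∈ A)).card := by
    intro x
    refine Finset.card_nbij' (fun A => A.image (fun y => y - x))
      (fun A => A.image (fun y => y + x)) ?_ ?_ ?_ ?_
    · intro A hA
      simp only [Finset.mem_coe, Finset.mem_filter, hSdef, mem_Scount] at hA ⊢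
      obtain ⟨⟨hcard, hcond⟩, hx⟩ := hA
      refine ⟨⟨?_, ?_⟩, ?_⟩
      · rw [Finset.card_image_of_injective _ (sub_left_injective), hcard]
      · rintro a ha b hb hab
        obtain ⟨y, hy, rfl⟩ := Finset.mem_image.mp ha
        obtain ⟨z, hz, rfl⟩ := Finset.mem_image.mp hb
        have hyz : y ≠ z := fun h => hab (by rw [h])
        have : y - x - (z - x) = y - z := by ring
        rw [this]
        exact hcond y hy z hz hyz
      · exact Finset.mem_image.mpr ⟨x, hx, sub_self x⟩
    · intro A hA
      simp only [Finset.mem_coe, Finset.mem_filter, hSdef, mem_Scount] at hA ⊢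
      obtain ⟨⟨hcard, hcond⟩, h0⟩ := hA
      refine ⟨⟨?_, ?_⟩, ?_⟩
      · rw [Finset.card_image_of_injective _ (add_left_injective x), hcard]
      · rintro a ha b hb hab
        obtain ⟨y, hy, rfl⟩ := Finset.mem_image.mp ha
        obtain ⟨z, hz, rfl⟩ := Finset.mem_image.mp hb
        have hyz : y ≠ z := fun h => hab (by rw [h])
        have : y + x - (z + x) = y - z := by ring
        rw [this]
        exact hcond y hy z hz hyz
      · exact Finset.mem_image.mpr ⟨0, h0, zero_add x⟩
    · intro A _
      beta_reduce
      rw [Finset.image_image]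
      have : ((fun y => y + x) ∘ fun y => y - x) = id := by
        funext y; simp
      rw [this, Finset.image_id]
    · intro A _
      beta_reduce
      rw [Finset.image_image]
      have : ((fun y => y - x) ∘ fun y => y + x) = id := by
        funext y; simp
      rw [this, Finset.image_id]
  -- double counting
  have hsum : n * S.card = N * (S.filter (fun A => (0:ZMod N) ∈ A)).card := by
    calc n * S.card = ∑ A ∈ S, A.card := by
          rw [Finset.sum_congr rfl (fun A hA => (mem_Scount.mp hA).1),
            Finset.sum_const, smul_eq_mul, mul_comm]
      _ = ∑ A ∈ S, ∑ x : ZMod N, if x ∈ A then 1 else 0 := by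
          refine Finset.sum_congr rfl fun A _ => ?_
          rw [Finset.sum_ite_mem, Finset.univ_inter, Finset.card_eq_sum_ones]
      _ = ∑ x : ZMod N, ∑ A ∈ S, if x ∈ A then 1 else 0 := Finset.sum_comm
      _ = ∑ x : ZMod N, (S.filter (fun A => x ∈ A)).card := by
          exact Finset.sum_congr rfl fun x _ => (Finset.card_filter _ _).symm
      _ = ∑ _x : ZMod N, (S.filter (fun A => (0:ZMod N) ∈ A)).card :=
          Finset.sum_congr rfl fun x _ => htrans x
      _ = N * (S.filter (fun A => (0:ZMod N) ∈ A)).card := by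
          rw [Finset.sum_const, Finset.card_univ, ZMod.card, smul_eq_mul]
  -- bijection with gapSet
  have hbij : (S.filter (fun A => (0:ZMod N) ∈ A)).card
      = (gapSet k (N - 2*k - 1) (n-1)).card := by
    refine Finset.card_nbij'
      (fun A => (A.erase 0).image (fun x : ZMod N => x.val - (k+1)))
      (fun t => insert (0:ZMod N) (t.image (fun i => ((i + (k+1) : ℕ) : ZMod N))))
      ?_ ?_ ?_ ?_
    · intro A hA
      simp only [Finset.mem_coe, Finset.mem_filter, hSdef, mem_Scount] at hA
      obtain ⟨⟨hcard, hcond⟩, h0⟩ := hA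
      have hval : ∀ b ∈ A.erase 0, k + 1 ≤ (b : ZMod N).val ∧ (b : ZMod N).val + k < N := by
        intro b hb
        have hbA := Finset.mem_of_mem_erase hb
        have hbne := Finset.ne_of_mem_erase hb
        have := hcond b hbA 0 h0 hbne
        rw [sub_zero] at this
        omega
      simp only [Finset.mem_coe, gapSet, Finset.mem_filter, Finset.mem_powersetCard]
      refine ⟨⟨?_, ?_⟩, ?_⟩
      · intro j hj
        obtain ⟨b, hb, rfl⟩ := Finset.mem_image.mp hj
        have := hval b hb
        exact Finset.mem_range.mpr (by omega)
      · rw [Finset.card_image_of_injOn, Finset.card_erase_of_mem h0, hcard]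
        intro b hb c hc hbc
        simp only at hbc
        have h1 := hval b (Finset.mem_coe.mp hb)
        have h2 := hval c (Finset.mem_coe.mp hc)
        exact ZMod.val_injective N (by omega)
      · rintro a' ha' b' hb' hab'
        obtain ⟨b, hb, rfl⟩ := Finset.mem_image.mp ha'
        obtain ⟨c, hc, rfl⟩ := Finset.mem_image.mp hb'
        have h1 := hval b hb
        have h2 := hval c hc
        have hbclt : b.val < c.val := by omega
        have hbc : b ≠ c := fun h => by rw [h] at hbclt; omega
        have := hcond c (Finset.mem_of_mem_erase hc) b (Finset.mem_of_mem_erase hb)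
          (fun h => hbc h.symm)
        rw [ZMod.val_sub (le_of_lt hbclt)] at this
        omega
    · intro t ht
      simp only [Finset.mem_coe, gapSet, Finset.mem_filter, Finset.mem_powersetCard] at ht
      obtain ⟨⟨hsub, hcard⟩, hq⟩ := ht
      have hlt : ∀ i ∈ t, i < N - 2*k - 1 := fun i hi => Finset.mem_range.mp (hsub hi)
      have hvt : ∀ i ∈ t, ((i + (k+1) : ℕ) : ZMod N).val = i + (k+1) := by
        intro i hi
        exact ZMod.val_cast_of_lt (by have := hlt i hi; omega)
      have h0not : (0 : ZMod N) ∉ t.image (fun i => ((i + (k+1) : ℕ) : ZMod N)) := by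
        intro h
        obtain ⟨i, hi, hieq⟩ := Finset.mem_image.mp h
        have := hvt i hi
        rw [hieq, ZMod.val_zero] at this
        omega
      simp only [Finset.mem_coe, Finset.mem_filter, hSdef, mem_Scount]
      refine ⟨⟨?_, ?_⟩, Finset.mem_insert_self _ _⟩
      · rw [Finset.card_insert_of_notMem h0not, Finset.card_image_of_injOn, hcard]
        · omega
        · intro i hi j hj hij
          simp only at hij
          have h1 := hvt i (Finset.mem_coe.mp hi)
          have h2 := hvt j (Finset.mem_coe.mp hj)
          rw [hij] at h1
          omega
      · intro a ha b hb hab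
        rcases Finset.mem_insert.mp ha with ha0 | haim <;>
          rcases Finset.mem_insert.mp hb with hb0 | hbim
        · exact absurd (ha0.trans hb0.symm) hab
        · -- a = 0, b in image
          obtain ⟨j, hj, rfl⟩ := Finset.mem_image.mp hbim
          have hv := hvt j hj
          have hjlt := hlt j hj
          have hbne : ((j + (k+1) : ℕ) : ZMod N) ≠ 0 := by
            intro h; rw [h, ZMod.val_zero] at hv; omega
          rw [ha0, zero_sub, ZMod.neg_val, if_neg hbne, hv]
          omega
        · obtain ⟨i, hi, rfl⟩ := Finset.mem_image.mp haim
          have hv := hvt i hi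
          have hilt := hlt i hi
          rw [hb0, sub_zero, hv]
          omega
        · obtain ⟨i, hi, rfl⟩ := Finset.mem_image.mp haim
          obtain ⟨j, hj, rfl⟩ := Finset.mem_image.mp hbim
          have hvi := hvt i hi
          have hvj := hvt j hj
          have hilt := hlt i hi
          have hjlt := hlt j hj
          have hij : i ≠ j := by
            intro h; rw [h] at hab; exact hab rfl
          rcases Nat.lt_or_ge j i with hji | hij'
          · have := hq j hj i hi hji
            rw [ZMod.val_sub (by omega)]
            omega
          · have hji' : i < j := by omega
            have := hq i hi j hj hji'
            have hsub' : ((j + (k+1) : ℕ) : ZMod N) - ((i + (k+1) : ℕ) : ZMod N) ≠ 0 := by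
              intro h
              have := ZMod.val_sub (a := ((j + (k+1) : ℕ) : ZMod N))
                (b := ((i + (k+1) : ℕ) : ZMod N)) (by omega)
              rw [h, ZMod.val_zero] at this
              omega
            have heq : ((i + (k+1) : ℕ) : ZMod N) - ((j + (k+1) : ℕ) : ZMod N)
                = -(((j + (k+1) : ℕ) : ZMod N) - ((i + (k+1) : ℕ) : ZMod N)) := by ring
            rw [heq, ZMod.neg_val, if_neg hsub',
              ZMod.val_sub (by omega : ((i + (k+1) : ℕ) : ZMod N).val
                ≤ ((j + (k+1) : ℕ) : ZMod N).val)]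
            omega
    · -- left inverse : ψ (φ A) = A
      intro A hA
      simp only [Finset.mem_coe, Finset.mem_filter, hSdef, mem_Scount] at hA
      obtain ⟨⟨hcard, hcond⟩, h0⟩ := hA
      have hval : ∀ b ∈ A.erase 0, k + 1 ≤ (b : ZMod N).val ∧ (b : ZMod N).val + k < N := by
        intro b hb
        have hbA := Finset.mem_of_mem_erase hb
        have hbne := Finset.ne_of_mem_erase hb
        have := hcond b hbA 0 h0 hbne
        rw [sub_zero] at this
        omega
      beta_reduce
      rw [Finset.image_image]
      have himg : (A.erase 0).image
          ((fun i : ℕ => ((i + (k+1) : ℕ) : ZMod N)) ∘ (fun x : ZMod N => x.val - (k+1)))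
          = A.erase 0 := by
        rw [show ((fun i : ℕ => ((i + (k+1) : ℕ) : ZMod N))
            ∘ (fun x : ZMod N => x.val - (k+1))) = fun x : ZMod N => ((x.val - (k+1) + (k+1) : ℕ) : ZMod N) from rfl]
        rw [Finset.image_congr (g := id), Finset.image_id]
        intro b hb
        have := hval b hb
        simp only [id]
        rw [show b.val - (k+1) + (k+1) = b.val by omega]
        exact ZMod.natCast_rightInverse b
      rw [himg, Finset.insert_erase h0]
    · -- right inverse : φ (ψ t) = t
      intro t ht
      simp only [Finset.mem_coe, gapSet, Finset.mem_filter, Finset.mem_powersetCard] at ht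
      obtain ⟨⟨hsub, hcard⟩, hq⟩ := ht
      have hlt : ∀ i ∈ t, i < N - 2*k - 1 := fun i hi => Finset.mem_range.mp (hsub hi)
      have hvt : ∀ i ∈ t, ((i + (k+1) : ℕ) : ZMod N).val = i + (k+1) := by
        intro i hi
        exact ZMod.val_cast_of_lt (by have := hlt i hi; omega)
      have h0not : (0 : ZMod N) ∉ t.image (fun i => ((i + (k+1) : ℕ) : ZMod N)) := by
        intro h
        obtain ⟨i, hi, hieq⟩ := Finset.mem_image.mp h
        have := hvt i hi
        rw [hieq, ZMod.val_zero] at this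
        omega
      beta_reduce
      rw [Finset.erase_insert h0not, Finset.image_image]
      rw [Finset.image_congr (g := id), Finset.image_id]
      intro i hi
      simp only [Function.comp, id]
      rw [hvt i hi]
      omega
  -- final arithmetic
  have hg2 : (gapSet k (N - 2*k - 1) (n-1)).card = (N - n*k - 1).choose (n-1) := by
    rw [gapSet_card]
    match n, hn with
    | 1, _ => simp
    | m+2, _ =>
      congr 1
      have h1 : (m+2)*k = m*k + 2*k := by ring
      have h2 : (m+2-1-1)*k = m*k := by norm_num
      rw [h2]
      omega
  have hsum2 : n * S.card = N * (N - n*k - 1).choose (n-1) := by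
    rw [hsum, hbij, hg2]
  set M := N - n*k with hM
  have hM1 : 1 ≤ M := by omega
  have key : M * ((M-1).choose (n-1)) = M.choose n * n := by
    have := Nat.add_one_mul_choose_eq (M-1) (n-1)
    rw [show M - 1 + 1 = M by omega, show n - 1 + 1 = n by omega] at this
    exact this
  rw [hcount]
  have hmul : n * (M * S.card) = n * (N * M.choose n) := by
    calc n * (M * S.card) = M * (n * S.card) := by ring
      _ = M * (N * (M-1).choose (n-1)) := by
          rw [hsum2]
      _ = N * (M * (M-1).choose (n-1)) := by ring
      _ = N * (M.choose n * n) := by rw [key]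
      _ = n * (N * M.choose n) := by ring
  exact Nat.eq_of_mul_eq_mul_left hn hmul
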